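/- Let G be an ordered abelian group possessing a nontrivial convex divisible subgroup H. Then G is closed in its divisible hull. -/

import Mathlib

/-- Let `G` be an ordered abelian group possessing a nontrivial convex divisible subgroup `H`.
Then `G` is closed in its divisible hull `D` (modelled as a divisible ordered abelian group
`D` with an order-embedding `f : G →+ D` such that every element of `D` has a positive
multiple in the image of `f`): no element of `D` outside the image of `G` is a limit point
of `G`. -/
theorem stmt_4 {G D : Type*} [AddCommGroup G] [LinearOrder G] [IsOrderedAddMonoid G]
    [AddCommGroup D] [LinearOrder D] [IsOrderedAddMonoid D]
    (f : G →+ D) (hf : StrictMono f)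
    (hdivD : ∀ (d : D) (n : ℕ), 0 < n → ∃ e : D, n • e = d)
    (hhull : ∀ d : D, ∃ (n : ℕ) (g : G), 0 < n ∧ n • d = f g)
    (H : AddSubgroup G) (hH : H ≠ ⊥)
    (hconv : ∀ a b : G, b ∈ H → 0 ≤ a → a ≤ b → a ∈ H)
    (hdiv : ∀ (n : ℕ), 0 < n → ∀ h ∈ H, ∃ h' ∈ H, n • h' = h) :
    ∀ x : D, x ∉ Set.range f →
      ∃ a b : D, a < x ∧ x < b ∧ ∀ g : G, f g ∉ Set.Ioo a b := by
  intro x hx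
  -- get a positive element of H
  obtain ⟨⟨h₀, hh₀H⟩, hh₀ne⟩ := (AddSubgroup.ne_bot_iff_exists_ne_zero).mp hH
  obtain ⟨h, hhH, hhpos⟩ : ∃ h ∈ H, 0 < h := by
    rcases lt_trichotomy (h₀ : G) 0 with hlt | heq | hgt
    · exact ⟨-h₀, H.neg_mem hh₀H, by simpa using hlt⟩
    · exact absurd (Subtype.ext heq) hh₀ne
    · exact ⟨h₀, hh₀H, hgt⟩
  obtain ⟨n, g₀, hn, hng⟩ := hhull x
  have hn' : n ≠ 0 := hn.ne'
  obtain ⟨h', hh'H, hh'⟩ := hdiv n hn h hhH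
  have hh'pos : 0 < h' := by
    by_contra hle
    push_neg at hle
    exact absurd (hh' ▸ nsmul_nonpos hle n) (not_le.mpr hhpos)
  have hfh' : 0 < f h' := by simpa using hf hh'pos
  refine ⟨x - f h', x + f h', sub_lt_self x hfh', lt_add_of_pos_right x hfh', ?_⟩
  rintro g ⟨hg1, hg2⟩
  -- multiply by n
  have k1 : n • (x - f h') < n • f g := nsmul_lt_nsmul_right hn' hg1
  have k2 : n • f g < n • (x + f h') := nsmul_lt_nsmul_right hn' hg2
  rw [smul_sub, hng, ← map_nsmul, ← map_nsmul, ← map_sub] at k1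
  rw [smul_add, hng, ← map_nsmul, ← map_nsmul, ← map_add] at k2
  have l1 : g₀ - h < n • g := hf.lt_iff_lt.mp (by simpa [hh'] using k1)
  have l2 : n • g < g₀ + h := hf.lt_iff_lt.mp (by simpa [hh'] using k2)
  have hdH : n • g - g₀ ∈ H := by
    have d1 : n • g - g₀ < h := by rwa [sub_lt_iff_lt_add'] 
    have d2 : g₀ - n • g < h := sub_lt_comm.mp l1
    rcases le_total 0 (n • g - g₀) with hpos | hneg
    · exact hconv _ h hhH hpos d1.le
    · have : -(n • g - g₀) ∈ H := by
        refine hconv _ h hhH (neg_nonneg.mpr hneg) ?_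
        rw [neg_sub]; exact d2.le
      simpa using H.neg_mem this
  obtain ⟨k, _, hk⟩ := hdiv n hn _ hdH
  have : n • f (g - k) = n • x := by
    rw [← map_nsmul, smul_sub, hk, hng]
    congr 1
    abel
  have hx' : f (g - k) = x := by
    rcases lt_trichotomy (f (g - k)) x with hlt | heq | hgt
    · exact absurd this (ne_of_lt (nsmul_lt_nsmul_right hn' hlt))
    · exact heq
    · exact absurd this (ne_of_gt (nsmul_lt_nsmul_right hn' hgt))
  exact hx ⟨g - k, hx'⟩
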